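/- Let p be an odd prime and G = GL₂(F_p) with Borel subgroup B, and U₁ (resp. U₂) the index-2 subgroup of B where the top-left (resp. bottom-right) entry is a nonzero square. Then the complex permutation representations C[G/U₁] and C[G/U₂] are isomorphic as G-representations. -/

import Mathlib

open Matrix

section

variable (p : ℕ) [Fact p.Prime]

local notation "M2" => Matrix (Fin 2) (Fin 2) (ZMod p)

private lemma det_isUnit (a : GL (Fin 2) (ZMod p)) : IsUnit (a : M2).det :=
  isUnit_iff_exists_inv.2 ⟨(a⁻¹ : GL (Fin 2) (ZMod p)).val.det,
    by rw [← det_mul, ← Units.val_mul, mul_inv_cancel]; simp⟩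

private lemma mul_entry (a b : GL (Fin 2) (ZMod p)) (i j : Fin 2) :
    ((a * b : GL (Fin 2) (ZMod p)) : M2) i j =
      (a : M2) i 0 * (b : M2) 0 j + (a : M2) i 1 * (b : M2) 1 j := by
  rw [Units.val_mul, Matrix.mul_apply, Fin.sum_univ_two]

private lemma inv_entries (a : GL (Fin 2) (ZMod p)) (ha1 : (a : M2) 1 0 = 0) :
    ((a⁻¹ : GL (Fin 2) (ZMod p)) : M2) 1 0 = 0 ∧
      ((a⁻¹ : GL (Fin 2) (ZMod p)) : M2) 0 0 = ((a : M2) 0 0)⁻¹ ∧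
      ((a⁻¹ : GL (Fin 2) (ZMod p)) : M2) 1 1 = ((a : M2) 1 1)⁻¹ := by
  have hdetu := det_isUnit p a
  have hdet : (a : M2).det = (a : M2) 0 0 * (a : M2) 1 1 := by
    rw [det_fin_two, ha1]; ring
  rw [hdet] at hdetu
  have h00 : (a : M2) 0 0 ≠ 0 := fun h => by rw [h, zero_mul] at hdetu; simp at hdetu
  have h11 : (a : M2) 1 1 ≠ 0 := fun h => by rw [h, mul_zero] at hdetu; simp at hdetu
  have hcoe : ((a⁻¹ : GL (Fin 2) (ZMod p)) : M2) = (a : M2)⁻¹ := coe_units_inv a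
  rw [hcoe, inv_def, hdet]
  refine ⟨by simp [adjugate_fin_two, ha1], ?_, ?_⟩ <;>
  · simp [adjugate_fin_two, Ring.inverse_eq_inv', mul_inv]
    field_simp
    try ring

/-- The index-2 subgroup `U₁` of the Borel subgroup of `GL₂(𝔽_p)`: invertible upper
triangular matrices whose top-left entry is a (nonzero) square in `𝔽_p`. -/
def U₁ : Subgroup (GL (Fin 2) (ZMod p)) where
  carrier := {g | (g : M2) 1 0 = 0 ∧ IsSquare ((g : M2) 0 0)}
  one_mem' := by constructor <;> simp
  mul_mem' := by
    rintro a b ⟨ha1, ha2⟩ ⟨hb1, hb2⟩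
    refine ⟨?_, ?_⟩ <;> rw [mul_entry]
    · rw [ha1, hb1]; ring
    · rw [hb1]; simpa using ha2.mul hb2
  inv_mem' := by
    rintro a ⟨ha1, ha2⟩
    obtain ⟨hi1, hi2, -⟩ := inv_entries p a ha1
    exact ⟨hi1, by rw [hi2]; obtain ⟨c, hc⟩ := ha2; exact ⟨c⁻¹, by rw [← mul_inv, ← hc]⟩⟩

/-- The index-2 subgroup `U₂` of the Borel subgroup of `GL₂(𝔽_p)`: invertible upper
triangular matrices whose bottom-right entry is a (nonzero) square in `𝔽_p`. -/
def U₂ : Subgroup (GL (Fin 2) (ZMod p)) where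
  carrier := {g | (g : M2) 1 0 = 0 ∧ IsSquare ((g : M2) 1 1)}
  one_mem' := by constructor <;> simp
  mul_mem' := by
    rintro a b ⟨ha1, ha2⟩ ⟨hb1, hb2⟩
    refine ⟨?_, ?_⟩ <;> rw [mul_entry]
    · rw [ha1, hb1]; ring
    · rw [ha1]; simpa using ha2.mul hb2
  inv_mem' := by
    rintro a ⟨ha1, ha2⟩
    obtain ⟨hi1, -, hi3⟩ := inv_entries p a ha1
    exact ⟨hi1, by rw [hi3]; obtain ⟨c, hc⟩ := ha2; exact ⟨c⁻¹, by rw [← mul_inv, ← hc]⟩⟩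

end
section Aux

open Matrix Finset

variable (p : ℕ) [Fact p.Prime]

local notation "M2" => Matrix (Fin 2) (Fin 2) (ZMod p)
local notation "Gl" => GL (Fin 2) (ZMod p)

private noncomputable def η (t : ZMod p) : ℂ := ((quadraticChar (ZMod p) t : ℤ) : ℂ)

variable {p}

private lemma η_mul (a b : ZMod p) : η p (a * b) = η p a * η p b := by
  rw [η, η, η, _root_.map_mul (quadraticChar (ZMod p))]
  push_cast
  ring

private lemma η_zero : η p (0 : ZMod p) = 0 := by simp [η]

private lemma hchar (hp : Odd p) : ringChar (ZMod p) ≠ 2 := by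
  rw [ZMod.ringChar_zmod_n]
  rintro rfl
  simp [Nat.odd_iff] at hp

private lemma η_sq {a : ZMod p} (ha : a ≠ 0) : η p a * η p a = 1 := by
  have h : quadraticChar (ZMod p) a * quadraticChar (ZMod p) a = 1 := by
    have := quadraticChar_sq_one ha; rwa [sq] at this
  rw [η, ← Int.cast_mul, h, Int.cast_one]

private lemma η_sq' {a : ZMod p} (ha : a ≠ 0) : η p (a * a) = 1 := by
  rw [η_mul, η_sq ha]

private lemma η_isSquare {a : ZMod p} (ha : a ≠ 0) (h : IsSquare a) : η p a = 1 := by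
  rw [η, (quadraticChar_one_iff_isSquare ha).mpr h, Int.cast_one]

private lemma η_not_isSquare {a : ZMod p} (h : ¬IsSquare a) : η p a = -1 := by
  rw [η, (quadraticChar_neg_one_iff_not_isSquare (F := ZMod p)).mpr h]
  push_cast; ring

private lemma η_sum (hp : Odd p) : ∑ t : ZMod p, η p t = 0 := by
  have h := quadraticChar_sum_zero (hchar hp)
  have : ((∑ a : ZMod p, quadraticChar (ZMod p) a : ℤ) : ℂ) = 0 := by rw [h]; simp
  rw [← this, Int.cast_sum]
  rfl

private lemma det_ne_zero (a : Gl) : (a : M2).det ≠ 0 :=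
  (det_isUnit p a).ne_zero

private lemma inv10 (y : Gl) :
    ((y⁻¹ : Gl) : M2) 1 0 = ((y : M2).det)⁻¹ * (-(y : M2) 1 0) := by
  rw [coe_units_inv, Matrix.inv_def, Ring.inverse_eq_inv']
  simp [adjugate_fin_two]

private lemma inv11 (y : Gl) :
    ((y⁻¹ : Gl) : M2) 1 1 = ((y : M2).det)⁻¹ * ((y : M2) 0 0) := by
  rw [coe_units_inv, Matrix.inv_def, Ring.inverse_eq_inv']
  simp [adjugate_fin_two]

end Aux
section Aux2

open Matrix Finset

variable {p : ℕ} [Fact p.Prime]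

local notation "M2" => Matrix (Fin 2) (Fin 2) (ZMod p)
local notation "Gl" => GL (Fin 2) (ZMod p)

/-- the antidiagonal involution matrix -/
private def wU : Gl :=
  ⟨!![0,1;1,0], !![0,1;1,0],
    by rw [Matrix.mul_fin_two, Matrix.one_fin_two]; norm_num,
    by rw [Matrix.mul_fin_two, Matrix.one_fin_two]; norm_num⟩

/-- diagonal unit diag(1, n) -/
private def diagU (n : ZMod p) (hn : n ≠ 0) : Gl :=
  ⟨!![1,0;0,n], !![1,0;0,n⁻¹],
    by rw [Matrix.mul_fin_two, Matrix.one_fin_two]; field_simp; simp,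
    by rw [Matrix.mul_fin_two, Matrix.one_fin_two]; field_simp; simp⟩

/-- upper unipotent shear -/
private def shearU (s : ZMod p) : Gl :=
  ⟨!![1,s;0,1], !![1,-s;0,1],
    by rw [Matrix.mul_fin_two, Matrix.one_fin_two]; norm_num,
    by rw [Matrix.mul_fin_two, Matrix.one_fin_two]; norm_num⟩

/-- indicator of the Borel -/
private noncomputable def bB (y : Gl) : ℂ := if (y : M2) 1 0 = 0 then 1 else 0

/-- the sign kernel -/
private noncomputable def φf (y : Gl) : ℂ := η p (-(y : M2).det * (y : M2) 1 0)

private noncomputable def fK (y : Gl) : ℂ := bB y + φf y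

variable (p) in
private noncomputable def c1 : ℂ := ∑ y : Gl, bB y

variable (p) in
private noncomputable def c2 : ℂ :=
  ∑ y : Gl, if (y : M2) 1 0 = 0 then 0 else 1

private noncomputable def fK' (y : Gl) : ℂ :=
  c2 p * bB y + c1 p * η p ((y : M2) 1 0)

private lemma c1_ne_zero : c1 p ≠ 0 := by
  rw [c1]
  simp only [bB]
  rw [Finset.sum_boole]
  rw [Nat.cast_ne_zero, ← Nat.pos_iff_ne_zero, Finset.card_pos]
  exact ⟨1, by simp⟩

private lemma c2_ne_zero : c2 p ≠ 0 := by
  have : c2 p = ∑ y : Gl, if ¬ ((y : M2) 1 0 = 0) then (1:ℂ) else 0 := by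
    rw [c2]; apply Finset.sum_congr rfl; intro y _; by_cases h : (y : M2) 1 0 = 0 <;> simp [h]
  rw [this, Finset.sum_boole, Nat.cast_ne_zero, ← Nat.pos_iff_ne_zero, Finset.card_pos]
  refine ⟨wU, ?_⟩
  simp [wU]

end Aux2
section Aux3

open Matrix Finset

variable {p : ℕ} [Fact p.Prime]

local notation "M2" => Matrix (Fin 2) (Fin 2) (ZMod p)
local notation "Gl" => GL (Fin 2) (ZMod p)

-- entry (1 0) of a product y * u where u has explicit val
private lemma entry10_mul (y u : Gl) :
    ((y * u : Gl) : M2) 1 0 = (y : M2) 1 0 * (u : M2) 0 0 + (y : M2) 1 1 * (u : M2) 1 0 :=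
  mul_entry p y u 1 0

private lemma det_mul_gl (y u : Gl) :
    ((y * u : Gl) : M2).det = (y : M2).det * (u : M2).det := by
  rw [Units.val_mul, det_mul]

-- L1
private lemma L1 (x : Gl) :
    ∑ y : Gl, bB y * bB (y⁻¹ * x) = if (x : M2) 1 0 = 0 then c1 p else 0 := by
  by_cases hx : (x : M2) 1 0 = 0
  · rw [if_pos hx, c1]
    refine Finset.sum_congr rfl fun y _ => ?_
    by_cases hy : (y : M2) 1 0 = 0
    · have h10 := (inv_entries p y hy).1
      have : ((y⁻¹ * x : Gl) : M2) 1 0 = 0 := by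
        rw [entry10_mul, h10, hx]; ring
      rw [bB, bB, if_pos hy, if_pos this, mul_one]
    · rw [bB, if_neg hy, zero_mul]
  · rw [if_neg hx]
    refine Finset.sum_eq_zero fun y _ => ?_
    by_cases hy : (y : M2) 1 0 = 0
    · obtain ⟨h10, -, h11⟩ := inv_entries p y hy
      have hy11 : (y : M2) 1 1 ≠ 0 := by
        intro h
        apply det_ne_zero y
        rw [det_fin_two, hy, h]; ring
      have : ((y⁻¹ * x : Gl) : M2) 1 0 ≠ 0 := by
        rw [entry10_mul, h10, h11]
        simpa [hx] using inv_ne_zero hy11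
      rw [bB, bB, if_neg this, mul_zero]
    · rw [bB, if_neg hy, zero_mul]

-- nonsquare inverse
private lemma not_isSquare_inv {n : ZMod p} (hn : ¬IsSquare n) : ¬IsSquare n⁻¹ := by
  rintro ⟨c, hc⟩
  exact hn ⟨c⁻¹, by rw [← inv_inv n, hc, mul_inv]⟩

private lemma nonsquare_ne_zero {n : ZMod p} (hn : ¬IsSquare n) : n ≠ 0 := by
  rintro rfl; exact hn ⟨0, by ring⟩

-- L2
private lemma L2 (x : Gl) {n : ZMod p} (hn : ¬IsSquare n) :
    ∑ y : Gl, bB y * η p (((y⁻¹ * x : Gl) : M2) 1 0) = 0 := by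
  have hn0 : n ≠ 0 := nonsquare_ne_zero hn
  set ν : Gl := diagU n hn0 with hν
  have key : ∀ y : Gl, bB (y * ν) * η p ((((y * ν)⁻¹ * x : Gl) : M2) 1 0)
      = - (bB y * η p (((y⁻¹ * x : Gl) : M2) 1 0)) := by
    intro y
    have h1 : ((y * ν : Gl) : M2) 1 0 = (y : M2) 1 0 := by
      rw [entry10_mul]; simp [hν, diagU]
    have h2 : (((y * ν)⁻¹ * x : Gl) : M2) 1 0
        = n⁻¹ * (((y⁻¹ * x : Gl) : M2) 1 0) := by
      rw [_root_.mul_inv_rev, mul_assoc]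
      rw [mul_entry p ν⁻¹ (y⁻¹ * x) 1 0]
      have e0 : ((ν⁻¹ : Gl) : M2) 1 0 = 0 := by simp [hν, diagU]
      have e1 : ((ν⁻¹ : Gl) : M2) 1 1 = n⁻¹ := by simp [hν, diagU]
      rw [e0, e1, mul_entry p y⁻¹ x 1 0]
      ring
    rw [h2, η_mul, η_not_isSquare (not_isSquare_inv hn), bB, bB, h1]
    ring
  have reindex : ∑ y : Gl, bB y * η p (((y⁻¹ * x : Gl) : M2) 1 0)
      = ∑ y : Gl, bB (y * ν) * η p ((((y * ν)⁻¹ * x : Gl) : M2) 1 0) :=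
    Fintype.sum_equiv (Equiv.mulRight ν)
      (fun y => bB (y * ν) * η p ((((y * ν)⁻¹ * x : Gl) : M2) 1 0))
      (fun y => bB y * η p (((y⁻¹ * x : Gl) : M2) 1 0)) (fun y => rfl) |>.symm
  have : ∑ y : Gl, bB y * η p (((y⁻¹ * x : Gl) : M2) 1 0)
      = - ∑ y : Gl, bB y * η p (((y⁻¹ * x : Gl) : M2) 1 0) := by
    conv_lhs => rw [reindex]
    rw [← Finset.sum_neg_distrib]
    exact Finset.sum_congr rfl fun y _ => key y
  exact add_self_eq_zero.mp (by linear_combination this)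

-- L3
private lemma L3 (x : Gl) {n : ZMod p} (hn : ¬IsSquare n) :
    ∑ y : Gl, φf y * bB (y⁻¹ * x) = 0 := by
  have hn0 : n ≠ 0 := nonsquare_ne_zero hn
  set ν : Gl := diagU n hn0 with hν
  have key : ∀ y : Gl, φf (y * ν) * bB ((y * ν)⁻¹ * x)
      = - (φf y * bB (y⁻¹ * x)) := by
    intro y
    have h1 : ((y * ν : Gl) : M2) 1 0 = (y : M2) 1 0 := by
      rw [entry10_mul]; simp [hν, diagU]
    have hdet : ((y * ν : Gl) : M2).det = (y : M2).det * n := by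
      rw [det_mul_gl]
      congr 1
      show Matrix.det !![1,0;0,n] = n
      rw [det_fin_two_of]; ring
    have h2 : (((y * ν)⁻¹ * x : Gl) : M2) 1 0
        = n⁻¹ * (((y⁻¹ * x : Gl) : M2) 1 0) := by
      rw [_root_.mul_inv_rev, mul_assoc, mul_entry p ν⁻¹ (y⁻¹ * x) 1 0]
      have e0 : ((ν⁻¹ : Gl) : M2) 1 0 = 0 := by simp [hν, diagU]
      have e1 : ((ν⁻¹ : Gl) : M2) 1 1 = n⁻¹ := by simp [hν, diagU]
      rw [e0, e1, mul_entry p y⁻¹ x 1 0]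
      ring
    have hb : bB ((y * ν)⁻¹ * x) = bB (y⁻¹ * x) := by
      rw [bB, bB, h2]
      congr 1
      simp [mul_eq_zero, inv_eq_zero, hn0]
    have hφ : φf (y * ν) = - φf y := by
      rw [φf, φf, hdet, h1,
        show -((y : M2).det * n) * (y : M2) 1 0 = n * (-(y : M2).det * (y : M2) 1 0) by ring,
        η_mul, η_not_isSquare hn]
      ring
    rw [hφ, hb]; ring
  have reindex : ∑ y : Gl, φf y * bB (y⁻¹ * x)
      = ∑ y : Gl, φf (y * ν) * bB ((y * ν)⁻¹ * x) :=
    Fintype.sum_equiv (Equiv.mulRight ν) _ _ (fun y => rfl) |>.symm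
  have h2 : ∑ y : Gl, φf y * bB (y⁻¹ * x) = - ∑ y : Gl, φf y * bB (y⁻¹ * x) := by
    conv_lhs => rw [reindex]
    rw [← Finset.sum_neg_distrib]
    exact Finset.sum_congr rfl fun y _ => key y
  exact add_self_eq_zero.mp (by linear_combination h2)

end Aux3
section Aux4

open Matrix Finset

variable {p : ℕ} [Fact p.Prime]

local notation "M2" => Matrix (Fin 2) (Fin 2) (ZMod p)
local notation "Gl" => GL (Fin 2) (ZMod p)

private lemma φf_eq_zero {y : Gl} (hy : (y : M2) 1 0 = 0) : φf y = 0 := by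
  have h : -(y : M2).det * (y : M2) 1 0 = 0 := by rw [hy]; ring
  rw [φf, h, η_zero]

-- L4
private lemma L4 (hp : Odd p) (x : Gl) :
    ∑ y : Gl, φf y * η p (((y⁻¹ * x : Gl) : M2) 1 0)
      = if (x : M2) 1 0 = 0 then c2 p * η p ((x : M2) 0 0) else 0 := by
  by_cases hx : (x : M2) 1 0 = 0
  · rw [if_pos hx]
    have key : ∀ y : Gl, φf y * η p (((y⁻¹ * x : Gl) : M2) 1 0)
        = (if (y : M2) 1 0 = 0 then 0 else 1) * η p ((x : M2) 0 0) := by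
      intro y
      by_cases hy : (y : M2) 1 0 = 0
      · rw [φf_eq_zero hy, if_pos hy, zero_mul, zero_mul]
      · rw [if_neg hy, one_mul]
        have harg : ((y⁻¹ * x : Gl) : M2) 1 0
            = ((y : M2).det)⁻¹ * (-(y : M2) 1 0) * ((x : M2) 0 0) := by
          rw [mul_entry p y⁻¹ x 1 0, inv10, inv11, hx]
          ring
        have hd := det_ne_zero y
        rw [φf, harg, ← η_mul]
        have : -(y : M2).det * (y : M2) 1 0
            * (((y : M2).det)⁻¹ * (-(y : M2) 1 0) * (x : M2) 0 0)
            = ((y : M2).det * ((y : M2).det)⁻¹)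
              * (((y : M2) 1 0 * (y : M2) 1 0) * (x : M2) 0 0) := by ring
        rw [this, mul_inv_cancel₀ hd, one_mul, η_mul, η_mul, η_sq hy, one_mul]
    rw [Finset.sum_congr rfl fun y _ => key y, ← Finset.sum_mul, c2]
  · rw [if_neg hx]
    set S := ∑ y : Gl, φf y * η p (((y⁻¹ * x : Gl) : M2) 1 0) with hS
    have stepA : ∀ s : ZMod p,
        S = ∑ y : Gl, φf y * η p (((y⁻¹ * (shearU s * x) : Gl) : M2) 1 0) := by
      intro s
      rw [hS]
      refine Fintype.sum_equiv (Equiv.mulLeft (shearU s)) _ _ fun y => ?_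
      have h1 : ((shearU s * y : Gl) : M2) 1 0 = (y : M2) 1 0 := by
        rw [mul_entry p (shearU s) y 1 0]; simp [shearU]
      have hdet : ((shearU s * y : Gl) : M2).det = (y : M2).det := by
        rw [det_mul_gl]
        have : ((shearU s : Gl) : M2).det = 1 := by
          show Matrix.det !![1,s;0,1] = 1
          rw [det_fin_two_of]; ring
        rw [this, one_mul]
      have h2 : (shearU s * y)⁻¹ * (shearU s * x) = y⁻¹ * x := by
        rw [_root_.mul_inv_rev, mul_assoc, inv_mul_cancel_left]
      show φf y * η p (((y⁻¹ * x : Gl) : M2) 1 0) = _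
      rw [show (Equiv.mulLeft (shearU s)) y = shearU s * y from rfl, h2, φf, φf, h1, hdet]
    have stepB : (p : ℂ) * S = ∑ y : Gl,
        φf y * ∑ s : ZMod p, η p (((y⁻¹ * (shearU s * x) : Gl) : M2) 1 0) := by
      calc (p : ℂ) * S = ∑ _s : ZMod p, S := by
            rw [Finset.sum_const, Finset.card_univ, ZMod.card, nsmul_eq_mul]
        _ = ∑ s : ZMod p, ∑ y : Gl, φf y * η p (((y⁻¹ * (shearU s * x) : Gl) : M2) 1 0) :=
            Finset.sum_congr rfl fun s _ => stepA s
        _ = ∑ y : Gl, ∑ s : ZMod p, φf y * η p (((y⁻¹ * (shearU s * x) : Gl) : M2) 1 0) :=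
            Finset.sum_comm
        _ = _ := Finset.sum_congr rfl fun y _ => by rw [Finset.mul_sum]
    have stepC : ∀ y : Gl,
        φf y * ∑ s : ZMod p, η p (((y⁻¹ * (shearU s * x) : Gl) : M2) 1 0) = 0 := by
      intro y
      by_cases hy : (y : M2) 1 0 = 0
      · rw [φf_eq_zero hy, zero_mul]
      · have hB : ((y⁻¹ : Gl) : M2) 1 0 * (x : M2) 1 0 ≠ 0 := by
          rw [inv10]
          exact mul_ne_zero (mul_ne_zero (inv_ne_zero (det_ne_zero y)) (neg_ne_zero.mpr hy)) hx
        set B := ((y⁻¹ : Gl) : M2) 1 0 * (x : M2) 1 0 with hBdef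
        set A := ((y⁻¹ : Gl) : M2) 1 0 * (x : M2) 0 0 + ((y⁻¹ : Gl) : M2) 1 1 * (x : M2) 1 0
          with hAdef
        have harg : ∀ s : ZMod p,
            ((y⁻¹ * (shearU s * x) : Gl) : M2) 1 0 = B * s + A := by
          intro s
          rw [mul_entry p y⁻¹ (shearU s * x) 1 0, mul_entry p (shearU s) x 0 0,
            mul_entry p (shearU s) x 1 0, hBdef, hAdef]
          have e00 : ((shearU s : Gl) : M2) 0 0 = 1 := rfl
          have e01 : ((shearU s : Gl) : M2) 0 1 = s := rfl
          have e10 : ((shearU s : Gl) : M2) 1 0 = 0 := rfl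
          have e11 : ((shearU s : Gl) : M2) 1 1 = 1 := rfl
          rw [e00, e01, e10, e11]
          ring
        have : ∑ s : ZMod p, η p (((y⁻¹ * (shearU s * x) : Gl) : M2) 1 0) = 0 := by
          rw [Finset.sum_congr rfl fun s _ => congrArg (η p) (harg s)]
          rw [Fintype.sum_equiv ((Equiv.mulLeft₀ B hB).trans (Equiv.addRight A))
            (fun s => η p (B * s + A)) (η p) (fun s => rfl)]
          exact η_sum hp
        rw [this, mul_zero]
    have hps : (p : ℂ) * S = 0 := by
      rw [stepB]
      exact Finset.sum_eq_zero fun y _ => stepC y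
    have hpne : (p : ℂ) ≠ 0 := by
      exact_mod_cast Nat.cast_ne_zero.mpr (Fact.out (p := p.Prime)).ne_zero
    exact (mul_eq_zero.mp hps).resolve_left hpne

-- the convolution identity
private lemma conv (hp : Odd p) {n : ZMod p} (hn : ¬IsSquare n) (x : Gl) :
    ∑ y : Gl, fK y * fK' (y⁻¹ * x)
      = if (x : M2) 1 0 = 0 then c1 p * c2 p * (1 + η p ((x : M2) 0 0)) else 0 := by
  have expand : ∀ y : Gl, fK y * fK' (y⁻¹ * x)
      = c2 p * (bB y * bB (y⁻¹ * x)) + c1 p * (bB y * η p (((y⁻¹ * x : Gl) : M2) 1 0))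
        + c2 p * (φf y * bB (y⁻¹ * x))
        + c1 p * (φf y * η p (((y⁻¹ * x : Gl) : M2) 1 0)) := by
    intro y; rw [fK, fK']; ring
  rw [Finset.sum_congr rfl fun y _ => expand y]
  rw [Finset.sum_add_distrib, Finset.sum_add_distrib, Finset.sum_add_distrib,
    ← Finset.mul_sum, ← Finset.mul_sum, ← Finset.mul_sum, ← Finset.mul_sum,
    L1, L2 x hn, L3 x hn, L4 hp]
  by_cases hx : (x : M2) 1 0 = 0
  · rw [if_pos hx, if_pos hx, if_pos hx]
    ring
  · rw [if_neg hx, if_neg hx, if_neg hx]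
    ring

end Aux4
section Aux5

open Matrix Finset

variable {p : ℕ} [Fact p.Prime]

local notation "M2" => Matrix (Fin 2) (Fin 2) (ZMod p)
local notation "Gl" => GL (Fin 2) (ZMod p)

-- left invariance of the kernels
private lemma fK_left_inv {u : Gl} (hu : u ∈ U₁ p) (m : Gl) : fK (u * m) = fK m := by
  obtain ⟨h1, h2⟩ := hu
  have hdet : (u : M2).det = (u : M2) 0 0 * (u : M2) 1 1 := by
    rw [det_fin_two, h1]; ring
  have h00 : (u : M2) 0 0 ≠ 0 := fun h => det_ne_zero u (by rw [hdet, h, zero_mul])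
  have h11 : (u : M2) 1 1 ≠ 0 := fun h => det_ne_zero u (by rw [hdet, h, mul_zero])
  have he : ((u * m : Gl) : M2) 1 0 = (u : M2) 1 1 * (m : M2) 1 0 := by
    rw [entry10_mul, h1]; ring
  have hb : bB (u * m) = bB m := by
    rw [bB, bB, he]
    congr 1
    simp [mul_eq_zero, h11]
  have hφ : φf (u * m) = φf m := by
    rw [φf, φf, det_mul_gl, he, hdet,
      show -((u : M2) 0 0 * (u : M2) 1 1 * (m : M2).det) * ((u : M2) 1 1 * (m : M2) 1 0)
        = (u : M2) 0 0 * (((u : M2) 1 1 * (u : M2) 1 1) * (-(m : M2).det * (m : M2) 1 0))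
        by ring,
      η_mul, η_mul, η_isSquare h00 h2, η_sq' h11]
    ring
  rw [fK, fK, hb, hφ]

private lemma fK'_left_inv {u : Gl} (hu : u ∈ U₂ p) (m : Gl) : fK' (u * m) = fK' m := by
  obtain ⟨h1, h2⟩ := hu
  have hdet : (u : M2).det = (u : M2) 0 0 * (u : M2) 1 1 := by
    rw [det_fin_two, h1]; ring
  have h11 : (u : M2) 1 1 ≠ 0 := fun h => det_ne_zero u (by rw [hdet, h, mul_zero])
  have he : ((u * m : Gl) : M2) 1 0 = (u : M2) 1 1 * (m : M2) 1 0 := by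
    rw [entry10_mul, h1]; ring
  have hb : bB (u * m) = bB m := by
    rw [bB, bB, he]
    congr 1
    simp [mul_eq_zero, h11]
  rw [fK', fK', hb, he, η_mul, η_isSquare h11 h2, one_mul]

variable (p)

private noncomputable def Φ₁ (q : Gl ⧸ U₁ p) : (Gl ⧸ U₂ p) →₀ ℂ :=
  Quotient.liftOn' q
    (fun g => ∑ y : Gl, fK (g⁻¹ * y) • Finsupp.single (QuotientGroup.mk y : Gl ⧸ U₂ p) (1 : ℂ))
    (by
      intro a b hab
      have hu : a⁻¹ * b ∈ U₁ p := QuotientGroup.leftRel_apply.mp hab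
      refine Finset.sum_congr rfl fun y _ => ?_
      congr 1
      have : b⁻¹ * y = (a⁻¹ * b)⁻¹ * (a⁻¹ * y) := by group
      rw [this, fK_left_inv ((U₁ p).inv_mem hu)])

private noncomputable def Φ₂ (q : Gl ⧸ U₂ p) : (Gl ⧸ U₁ p) →₀ ℂ :=
  Quotient.liftOn' q
    (fun g => ∑ z : Gl, fK' (g⁻¹ * z) • Finsupp.single (QuotientGroup.mk z : Gl ⧸ U₁ p) (1 : ℂ))
    (by
      intro a b hab
      have hu : a⁻¹ * b ∈ U₂ p := QuotientGroup.leftRel_apply.mp hab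
      refine Finset.sum_congr rfl fun z _ => ?_
      congr 1
      have : b⁻¹ * z = (a⁻¹ * b)⁻¹ * (a⁻¹ * z) := by group
      rw [this, fK'_left_inv ((U₂ p).inv_mem hu)])

private noncomputable def E₁ : ((Gl ⧸ U₁ p) →₀ ℂ) →ₗ[ℂ] ((Gl ⧸ U₂ p) →₀ ℂ) :=
  Finsupp.linearCombination ℂ (Φ₁ p)

private noncomputable def E₂ : ((Gl ⧸ U₂ p) →₀ ℂ) →ₗ[ℂ] ((Gl ⧸ U₁ p) →₀ ℂ) :=
  Finsupp.linearCombination ℂ (Φ₂ p)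

variable {p}

private lemma Φ₁_mk (g : Gl) :
    Φ₁ p (QuotientGroup.mk g)
      = ∑ y : Gl, fK (g⁻¹ * y) • Finsupp.single (QuotientGroup.mk y : Gl ⧸ U₂ p) (1 : ℂ) := rfl

private lemma Φ₂_mk (g : Gl) :
    Φ₂ p (QuotientGroup.mk g)
      = ∑ z : Gl, fK' (g⁻¹ * z) • Finsupp.single (QuotientGroup.mk z : Gl ⧸ U₁ p) (1 : ℂ) := rfl

private lemma ofMulAction_coeff {X : Type*} [MulAction Gl X] (g : Gl) (v : X →₀ ℂ) :
    (Representation.ofMulAction ℂ Gl X g ((MonoidAlgebra.coeffLinearEquiv ℂ).symm v)).coeff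
      = Finsupp.mapDomain (g • ·) v := rfl

-- equivariance at the level of Φ₁
set_option synthInstance.maxHeartbeats 1000000 in
private lemma Φ₁_equivariant (g : Gl) (q : Gl ⧸ U₁ p) :
    Φ₁ p (g • q) = (Representation.ofMulAction ℂ Gl (Gl ⧸ U₂ p) g
      ((MonoidAlgebra.coeffLinearEquiv ℂ).symm (Φ₁ p q))).coeff := by
  rw [ofMulAction_coeff]
  induction q using Quotient.inductionOn' with
  | h a =>
    show Φ₁ p (QuotientGroup.mk (g * a))
      = Finsupp.mapDomain (g • ·) (Φ₁ p (QuotientGroup.mk a))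
    rw [Φ₁_mk, Φ₁_mk, Finsupp.mapDomain_finset_sum]
    have hrhs : ∀ y : Gl,
        Finsupp.mapDomain (g • ·)
          (fK (a⁻¹ * y) • Finsupp.single (QuotientGroup.mk y : Gl ⧸ U₂ p) (1 : ℂ))
        = fK (a⁻¹ * y) • Finsupp.single (QuotientGroup.mk (g * y) : Gl ⧸ U₂ p) (1 : ℂ) := by
      intro y
      rw [Finsupp.mapDomain_smul, Finsupp.mapDomain_single, MulAction.Quotient.smul_mk,
        smul_eq_mul]
    rw [Finset.sum_congr rfl fun y _ => hrhs y]
    refine Fintype.sum_equiv (Equiv.mulLeft g⁻¹) _ _ fun y => ?_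
    show fK ((g * a)⁻¹ * y) • Finsupp.single (QuotientGroup.mk y : Gl ⧸ U₂ p) (1 : ℂ)
      = fK (a⁻¹ * (g⁻¹ * y)) • Finsupp.single (QuotientGroup.mk (g * (g⁻¹ * y)) : Gl ⧸ U₂ p) (1 : ℂ)
    rw [mul_inv_cancel_left, _root_.mul_inv_rev, mul_assoc]

end Aux5
section Aux6

open Matrix Finset

variable {p : ℕ} [Fact p.Prime]

local notation "M2" => Matrix (Fin 2) (Fin 2) (ZMod p)
local notation "Gl" => GL (Fin 2) (ZMod p)

open scoped Classical in
variable (p) in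
private noncomputable def NU : ℂ :=
  ∑ z : Gl, if ((z : M2) 1 0 = 0 ∧ IsSquare ((z : M2) 0 0)) then (1 : ℂ) else 0

private lemma NU_ne_zero : NU p ≠ 0 := by
  classical
  rw [NU, Finset.sum_boole, Nat.cast_ne_zero, ← Nat.pos_iff_ne_zero, Finset.card_pos]
  refine ⟨1, ?_⟩
  rw [Finset.mem_filter]
  refine ⟨Finset.mem_univ _, ?_, ?_⟩
  · show ((1 : Gl) : M2) 1 0 = 0
    simp [Matrix.one_apply]
  · show IsSquare (((1 : Gl) : M2) 0 0)
    have : ((1 : Gl) : M2) 0 0 = 1 := by simp [Matrix.one_apply]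
    rw [this]
    exact IsSquare.one

private lemma key_comp (hp : Odd p) {n : ZMod p} (hn : ¬IsSquare n) (g : Gl) :
    E₂ p (Φ₁ p (QuotientGroup.mk g))
      = (2 * c1 p * c2 p * NU p) • Finsupp.single (QuotientGroup.mk g : Gl ⧸ U₁ p) (1 : ℂ) := by
  classical
  rw [Φ₁_mk, map_sum]
  have step1 : ∀ y : Gl,
      E₂ p (fK (g⁻¹ * y) • Finsupp.single (QuotientGroup.mk y : Gl ⧸ U₂ p) (1 : ℂ))
      = ∑ z : Gl, (fK (g⁻¹ * y) * fK' (y⁻¹ * z))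
          • Finsupp.single (QuotientGroup.mk z : Gl ⧸ U₁ p) (1 : ℂ) := by
    intro y
    rw [_root_.map_smul, E₂, Finsupp.linearCombination_single, one_smul, Φ₂_mk,
      Finset.smul_sum]
    exact Finset.sum_congr rfl fun z _ => by rw [smul_smul]
  rw [Finset.sum_congr rfl fun y _ => step1 y, Finset.sum_comm]
  have step2 : ∀ z : Gl,
      (∑ y : Gl, (fK (g⁻¹ * y) * fK' (y⁻¹ * z))
          • Finsupp.single (QuotientGroup.mk z : Gl ⧸ U₁ p) (1 : ℂ))
      = (if ((g⁻¹ * z : Gl) : M2) 1 0 = 0 ∧ IsSquare (((g⁻¹ * z : Gl) : M2) 0 0)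
          then (1 : ℂ) else 0)
          • ((2 * c1 p * c2 p) • Finsupp.single (QuotientGroup.mk g : Gl ⧸ U₁ p) (1 : ℂ)) := by
    intro z
    rw [← Finset.sum_smul]
    have hre : ∑ y : Gl, fK (g⁻¹ * y) * fK' (y⁻¹ * z)
        = ∑ y : Gl, fK y * fK' (y⁻¹ * (g⁻¹ * z)) := by
      refine (Fintype.sum_equiv (Equiv.mulLeft g) _ _ fun y => ?_).symm
      show fK y * fK' (y⁻¹ * (g⁻¹ * z)) = fK (g⁻¹ * (g * y)) * fK' ((g * y)⁻¹ * z)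
      rw [inv_mul_cancel_left, _root_.mul_inv_rev, mul_assoc]
    rw [hre, conv hp hn (g⁻¹ * z)]
    by_cases h1 : ((g⁻¹ * z : Gl) : M2) 1 0 = 0
    · have h00 : ((g⁻¹ * z : Gl) : M2) 0 0 ≠ 0 := by
        intro h
        apply det_ne_zero (g⁻¹ * z)
        rw [det_fin_two, h1, h]; ring
      by_cases h2 : IsSquare (((g⁻¹ * z : Gl) : M2) 0 0)
      · have hmk : (QuotientGroup.mk z : Gl ⧸ U₁ p) = QuotientGroup.mk g := by
          symm
          exact (QuotientGroup.eq (s := U₁ p)).mpr ⟨h1, h2⟩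
        rw [if_pos h1, if_pos ⟨h1, h2⟩, η_isSquare h00 h2, hmk, one_smul]
        congr 1
        ring
      · rw [if_pos h1, if_neg (fun hc => h2 hc.2), η_not_isSquare h2, zero_smul]
        norm_num
    · rw [if_neg h1, if_neg (fun hc => h1 hc.1), zero_smul, zero_smul]
  rw [Finset.sum_congr rfl fun z _ => step2 z, ← Finset.sum_smul]
  have : ∑ z : Gl, (if ((g⁻¹ * z : Gl) : M2) 1 0 = 0 ∧ IsSquare (((g⁻¹ * z : Gl) : M2) 0 0)
      then (1 : ℂ) else 0) = NU p := by
    rw [NU]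
    exact Fintype.sum_equiv (Equiv.mulLeft g⁻¹) _ _ fun z => rfl
  rw [this, smul_smul]
  ring_nf

private lemma E₁_injective (hp : Odd p) {n : ZMod p} (hn : ¬IsSquare n) :
    Function.Injective (E₁ p) := by
  intro v w hvw
  have hC : (2 * c1 p * c2 p * NU p) ≠ 0 := by
    refine mul_ne_zero (mul_ne_zero (mul_ne_zero two_ne_zero c1_ne_zero) c2_ne_zero) NU_ne_zero
  have comp_eq : (E₂ p).comp (E₁ p) = (2 * c1 p * c2 p * NU p) • LinearMap.id := by
    refine Finsupp.lhom_ext fun a b => ?_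
    induction a using Quotient.inductionOn' with
    | h g =>
      show E₂ p (E₁ p (Finsupp.single (QuotientGroup.mk g) b)) = _
      rw [E₁, Finsupp.linearCombination_single, _root_.map_smul, key_comp hp hn, smul_smul,
        LinearMap.smul_apply, LinearMap.id_apply, mul_comm b, ← smul_smul,
        Finsupp.smul_single, smul_eq_mul, mul_one]
  have h2 : (2 * c1 p * c2 p * NU p) • v = (2 * c1 p * c2 p * NU p) • w := by
    have hv := congrArg (fun F => F v) comp_eq
    have hw := congrArg (fun F => F w) comp_eq
    simp only [LinearMap.comp_apply, LinearMap.smul_apply, LinearMap.id_apply] at hv hw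
    rw [← hv, ← hw, hvw]
  exact smul_right_injective _ hC h2

end Aux6
section Aux7

open Matrix Finset

variable {p : ℕ} [Fact p.Prime]

local notation "M2" => Matrix (Fin 2) (Fin 2) (ZMod p)
local notation "Gl" => GL (Fin 2) (ZMod p)

variable (p) in
private def wm : M2 := !![0,1;1,0]

private lemma hww : wm p * wm p = 1 := by
  rw [wm, Matrix.mul_fin_two, Matrix.one_fin_two]; norm_num

private lemma hwt : (wm p)ᵀ = wm p := by
  rw [wm]; ext i j; fin_cases i <;> fin_cases j <;> simp

private lemma sandwich (A B : M2) :
    (wm p * A * wm p) * (wm p * B * wm p) = wm p * (A * B) * wm p := by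
  simp only [Matrix.mul_assoc]
  rw [← Matrix.mul_assoc (wm p) (wm p) (B * wm p), hww, Matrix.one_mul]

private lemma unsandwich (A : M2) : wm p * (wm p * A * wm p) * wm p = A := by
  have h : wm p * (wm p * A * wm p) * wm p = (wm p * wm p) * A * (wm p * wm p) := by
    simp only [Matrix.mul_assoc]
  rw [h, hww, Matrix.one_mul, Matrix.mul_one]

private lemma sand_e10 (A : M2) : (wm p * A * wm p) 1 0 = A 0 1 := by
  simp [wm, Matrix.mul_apply, Matrix.vecMul, dotProduct, Fin.sum_univ_two]

private lemma sand_e00 (A : M2) : (wm p * A * wm p) 0 0 = A 1 1 := by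
  simp [wm, Matrix.mul_apply, Matrix.vecMul, dotProduct, Fin.sum_univ_two]

private lemma sand_e11 (A : M2) : (wm p * A * wm p) 1 1 = A 0 0 := by
  simp [wm, Matrix.mul_apply, Matrix.vecMul, dotProduct, Fin.sum_univ_two]

variable (p) in
private def τf (g : Gl) : Gl :=
  ⟨wm p * ((g⁻¹ : Gl) : M2)ᵀ * wm p, wm p * ((g : Gl) : M2)ᵀ * wm p,
    by rw [sandwich, ← Matrix.transpose_mul]
       rw [show ((g : Gl) : M2) * ((g⁻¹ : Gl) : M2) = 1 by
         rw [← Units.val_mul, mul_inv_cancel, Units.val_one]]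
       rw [Matrix.transpose_one, Matrix.mul_one, hww],
    by rw [sandwich, ← Matrix.transpose_mul]
       rw [show ((g⁻¹ : Gl) : M2) * ((g : Gl) : M2) = 1 by
         rw [← Units.val_mul, inv_mul_cancel, Units.val_one]]
       rw [Matrix.transpose_one, Matrix.mul_one, hww]⟩

private lemma τf_val (g : Gl) : ((τf p g : Gl) : M2) = wm p * ((g⁻¹ : Gl) : M2)ᵀ * wm p := rfl

private lemma τf_inv_val (g : Gl) :
    (((τf p g)⁻¹ : Gl) : M2) = wm p * ((g : Gl) : M2)ᵀ * wm p := rfl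

private lemma τf_invol (g : Gl) : τf p (τf p g) = g := by
  apply Units.ext
  rw [τf_val, τf_inv_val, Matrix.transpose_mul, Matrix.transpose_mul, hwt,
    Matrix.transpose_transpose]
  calc wm p * (wm p * (((g : Gl) : M2) * wm p)) * wm p
      = wm p * (wm p * ((g : Gl) : M2) * wm p) * wm p := by
        simp only [Matrix.mul_assoc]
    _ = ((g : Gl) : M2) := unsandwich _

private def φtw : Gl ≃* Gl where
  toFun := τf p
  invFun := τf p
  left_inv := τf_invol
  right_inv := τf_invol
  map_mul' g h := by
    apply Units.ext
    rw [Units.val_mul, τf_val, τf_val, τf_val, sandwich, ← Matrix.transpose_mul]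
    rw [_root_.mul_inv_rev, Units.val_mul]

private lemma hmap : (U₁ p).map (φtw (p := p)) = U₂ p := by
  ext x
  rw [Subgroup.mem_map]
  constructor
  · rintro ⟨u, hu, rfl⟩
    have hui := (U₁ p).inv_mem hu
    obtain ⟨h1, h2⟩ := hui
    show ((φtw u : Gl) : M2) 1 0 = 0 ∧ IsSquare (((φtw u : Gl) : M2) 1 1)
    have hv : ((φtw u : Gl) : M2) = wm p * ((u⁻¹ : Gl) : M2)ᵀ * wm p := rfl
    rw [hv, sand_e10, sand_e11]
    exact ⟨by rw [Matrix.transpose_apply]; exact h1, by rw [Matrix.transpose_apply]; exact h2⟩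
  · intro hx
    have hxi := (U₂ p).inv_mem hx
    obtain ⟨h1, h2⟩ := hxi
    refine ⟨τf p x, ?_, τf_invol x⟩
    show ((τf p x : Gl) : M2) 1 0 = 0 ∧ IsSquare (((τf p x : Gl) : M2) 0 0)
    rw [τf_val, sand_e10, sand_e00]
    exact ⟨by rw [Matrix.transpose_apply]; exact h1, by rw [Matrix.transpose_apply]; exact h2⟩

end Aux7
section Aux8

open Matrix Finset

variable {p : ℕ} [Fact p.Prime]

local notation "M2" => Matrix (Fin 2) (Fin 2) (ZMod p)
local notation "Gl" => GL (Fin 2) (ZMod p)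

private lemma τ_mem₁ {u : Gl} (hu : u ∈ U₁ p) : τf p u ∈ U₂ p := by
  rw [← hmap]
  exact Subgroup.mem_map_of_mem _ hu

private lemma τ_mem₂ {u : Gl} (hu : u ∈ U₂ p) : τf p u ∈ U₁ p := by
  rw [← hmap] at hu
  obtain ⟨v, hv, rfl⟩ := Subgroup.mem_map.mp hu
  show τf p (τf p v) ∈ U₁ p
  rw [τf_invol]
  exact hv

private lemma τf_mul_inv (a b : Gl) : (τf p a)⁻¹ * τf p b = τf p (a⁻¹ * b) := by
  have h1 : τf p (a⁻¹ * b) = τf p a⁻¹ * τf p b := map_mul (φtw (p := p)) a⁻¹ b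
  have h2 : τf p a⁻¹ = (τf p a)⁻¹ := map_inv (φtw (p := p)) a
  rw [h1, h2]

private def quotEquiv : (Gl ⧸ U₁ p) ≃ (Gl ⧸ U₂ p) where
  toFun := Quotient.map' (τf p) (fun a b hab => QuotientGroup.leftRel_apply.mpr (by
    rw [τf_mul_inv]
    exact τ_mem₁ (QuotientGroup.leftRel_apply.mp hab)))
  invFun := Quotient.map' (τf p) (fun a b hab => QuotientGroup.leftRel_apply.mpr (by
    rw [τf_mul_inv]
    exact τ_mem₂ (QuotientGroup.leftRel_apply.mp hab)))
  left_inv q := by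
    induction q using Quotient.inductionOn' with
    | h a => exact congrArg (Quotient.mk'' ·) (τf_invol a)
  right_inv q := by
    induction q using Quotient.inductionOn' with
    | h a => exact congrArg (Quotient.mk'' ·) (τf_invol a)

private lemma E₁_bijective (hp : Odd p) {n : ZMod p} (hn : ¬IsSquare n) :
    Function.Bijective (E₁ p) := by
  haveI : Fintype (Gl ⧸ U₁ p) := Fintype.ofFinite _
  haveI : Fintype (Gl ⧸ U₂ p) := Fintype.ofFinite _
  have hinj := E₁_injective hp hn
  have hcard : Fintype.card (Gl ⧸ U₁ p) = Fintype.card (Gl ⧸ U₂ p) :=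
    Fintype.card_congr quotEquiv
  have hfr : Module.finrank ℂ ((Gl ⧸ U₁ p) →₀ ℂ) = Module.finrank ℂ ((Gl ⧸ U₂ p) →₀ ℂ) := by
    rw [Module.finrank_finsupp_self, Module.finrank_finsupp_self, hcard]
  exact ⟨hinj, (LinearMap.injective_iff_surjective_of_finrank_eq_finrank hfr).mp hinj⟩

private lemma E₁_equivariant (g : Gl) (v : (Gl ⧸ U₁ p) →₀ ℂ) :
    E₁ p ((Representation.ofMulAction ℂ Gl (Gl ⧸ U₁ p) g
      ((MonoidAlgebra.coeffLinearEquiv ℂ).symm v)).coeff)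
      = (Representation.ofMulAction ℂ Gl (Gl ⧸ U₂ p) g
        ((MonoidAlgebra.coeffLinearEquiv ℂ).symm (E₁ p v))).coeff := by
  rw [ofMulAction_coeff, ofMulAction_coeff]
  induction v using Finsupp.induction_linear with
  | zero => simp
  | add f h hf hh => rw [Finsupp.mapDomain_add, map_add, map_add, hf, hh, Finsupp.mapDomain_add]
  | single q c =>
    rw [Finsupp.mapDomain_single, E₁, Finsupp.linearCombination_single,
      Finsupp.linearCombination_single, Φ₁_equivariant, ofMulAction_coeff, Finsupp.mapDomain_smul]

end Aux8
/-- For `p` an odd prime and `G = GL₂(𝔽_p)`, the complex permutation representations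
`ℂ[G/U₁]` and `ℂ[G/U₂]` are isomorphic as `G`-representations, where `U₁` (resp. `U₂`)
is the index-2 subgroup of the Borel with square top-left (resp. bottom-right) entry. -/
theorem stmt6 (p : ℕ) [Fact p.Prime] (hp : Odd p) :
    ∃ e : (GL (Fin 2) (ZMod p) ⧸ U₁ p →₀ ℂ) ≃ₗ[ℂ] (GL (Fin 2) (ZMod p) ⧸ U₂ p →₀ ℂ),
      ∀ (g : GL (Fin 2) (ZMod p)) (v : GL (Fin 2) (ZMod p) ⧸ U₁ p →₀ ℂ),
        e ((Representation.ofMulAction ℂ (GL (Fin 2) (ZMod p)) (GL (Fin 2) (ZMod p) ⧸ U₁ p) g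
          ((MonoidAlgebra.coeffLinearEquiv ℂ).symm v)).coeff) =
          (Representation.ofMulAction ℂ (GL (Fin 2) (ZMod p)) (GL (Fin 2) (ZMod p) ⧸ U₂ p) g
            ((MonoidAlgebra.coeffLinearEquiv ℂ).symm (e v))).coeff := by
  obtain ⟨n, hn⟩ := FiniteField.exists_nonsquare (F := ZMod p) (hchar hp)
  refine ⟨LinearEquiv.ofBijective (E₁ p) (E₁_bijective hp hn), fun g v => ?_⟩
  exact E₁_equivariant g v
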